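/- Let N be a set of observables on a state space S that is convex and closed under postprocessing. If an observable A is simulated by observables B^(1),…,B^(m), i.e., A_y = ∑_{i,x} p_i ν_{(i,x)y} B^(i)_x for a probability distribution (p_i) and a stochastic matrix ν, then the noise content of A with respect to N is at least the minimum of the noise contents of the simulators: w(A; N) ≥ min_{1≤i≤m} w(B^(i); N). -/

import Mathlib

open scoped BigOperators

/-- A real-valued function on the state space `S` is affine if it respects convex
combinations of states. -/
def AffineOn {V : Type*} [NormedAddCommGroup V] [NormedSpace ℝ V] (S : Set V)
    (e : S → ℝ) : Prop :=
  ∀ (s₁ s₂ : S) (p : ℝ), 0 ≤ p → p ≤ 1 →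
    ∀ h : p • (s₁ : V) + (1 - p) • (s₂ : V) ∈ S,
      e ⟨p • (s₁ : V) + (1 - p) • (s₂ : V), h⟩ = p * e s₁ + (1 - p) * e s₂

/-- An effect on `S`: an affine function with values in `[0,1]`. -/
def IsEffectFn {V : Type*} [NormedAddCommGroup V] [NormedSpace ℝ V] (S : Set V)
    (e : S → ℝ) : Prop :=
  AffineOn S e ∧ ∀ s, 0 ≤ e s ∧ e s ≤ 1

/-- An observable on the state space `S` with finite outcome set `Fin n`:
a family of effects summing to the unit effect. -/
structure Obs {V : Type*} [NormedAddCommGroup V] [NormedSpace ℝ V] (S : Set V) where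
  n : ℕ
  eff : Fin n → S → ℝ
  affine : ∀ x, AffineOn S (eff x)
  nonneg : ∀ x s, 0 ≤ eff x s
  normalized : ∀ s, ∑ x, eff x s = 1

variable {V : Type*} [NormedAddCommGroup V] [NormedSpace ℝ V] {S : Set V}

/-- `B` is a postprocessing of `A` (written `A → B`): `B` is obtained from `A` by a
stochastic matrix. -/
def Postprocess (A B : Obs S) : Prop :=
  ∃ ν : Fin A.n → Fin B.n → ℝ,
    (∀ x y, 0 ≤ ν x y) ∧ (∀ x, ∑ y, ν x y = 1) ∧
    ∀ y s, B.eff y s = ∑ x, ν x y * A.eff x s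

/-- Postprocessing equivalence `A ↔ B`. -/
def PPEquiv (A B : Obs S) : Prop := Postprocess A B ∧ Postprocess B A

/-- `A` is postprocessing clean: whenever `B → A` also `A → B`. -/
def PPClean (A : Obs S) : Prop := ∀ B : Obs S, Postprocess B A → Postprocess A B

/-- A nonzero effect is indecomposable if in any decomposition into two nonzero
effects, both summands are positive scalar multiples of it. -/
def IsIndecomposableEffect (S : Set V) (e : S → ℝ) : Prop :=
  e ≠ 0 ∧ ∀ e₁ e₂ : S → ℝ, IsEffectFn S e₁ → IsEffectFn S e₂ → e₁ ≠ 0 → e₂ ≠ 0 →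
    e = e₁ + e₂ →
    (∃ c : ℝ, 0 < c ∧ e₁ = c • e) ∧ (∃ c : ℝ, 0 < c ∧ e₂ = c • e)

/-- An observable is indecomposable if all its nonzero effects are indecomposable. -/
def IndecomposableObs (A : Obs S) : Prop :=
  ∀ x, A.eff x ≠ 0 → IsIndecomposableEffect S (A.eff x)

/-- An observable is extreme if any convex decomposition into observables with the
same outcome set is trivial. -/
def ExtremeObs (A : Obs S) : Prop :=
  ∀ B C : Fin A.n → S → ℝ,
    (∀ x, AffineOn S (B x)) → (∀ x s, 0 ≤ B x s) → (∀ s, ∑ x, B x s = 1) →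
    (∀ x, AffineOn S (C x)) → (∀ x s, 0 ≤ C x s) → (∀ s, ∑ x, C x s = 1) →
    ∀ lam : ℝ, 0 < lam → lam < 1 →
      (∀ x, A.eff x = lam • B x + (1 - lam) • C x) →
      B = A.eff ∧ C = A.eff

/-- `A` is simulable by the set of observables `𝓑`: `A` is obtained by mixing
finitely many members of `𝓑` (with a common outcome set) and postprocessing. -/
def Simulable (𝓑 : Set (Obs S)) (A : Obs S) : Prop :=
  ∃ (m k : ℕ) (B : Fin m → Obs S) (hk : ∀ i, (B i).n = k)
    (p : Fin m → ℝ) (ν : Fin m → Fin k → Fin A.n → ℝ),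
    (∀ i, B i ∈ 𝓑) ∧
    (∀ i, 0 ≤ p i) ∧ (∑ i, p i = 1) ∧
    (∀ i x y, 0 ≤ ν i x y) ∧ (∀ i x, ∑ y, ν i x y = 1) ∧
    ∀ y s, A.eff y s = ∑ i, ∑ x, p i * ν i x y * (B i).eff (Fin.cast (hk i).symm x) s

/-- The set of all `𝓑`-simulable observables. -/
def simSet (𝓑 : Set (Obs S)) : Set (Obs S) := {A | Simulable 𝓑 A}

/-- `A` is simulation irreducible: it can only be simulated by sets containing an
observable postprocessing equivalent to it. -/
def SimIrreducible (A : Obs S) : Prop :=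
  ∀ 𝓑 : Set (Obs S), Simulable 𝓑 A → ∃ B ∈ 𝓑, PPEquiv A B

/-- The effect of `A` at outcome `y ∈ ℕ`, extended by the zero effect outside the
outcome set of `A` (this realizes mixtures on a common outcome set). -/
def extEff (A : Obs S) (y : ℕ) (s : S) : ℝ :=
  if h : y < A.n then A.eff ⟨y, h⟩ s else 0

/-- `A = lam • N + (1 - lam) • B`, the mixture taken on a common outcome set by
extending all observables with zero effects. -/
def IsMixture (lam : ℝ) (N B A : Obs S) : Prop :=
  ∀ (y : ℕ) (s : S), extEff A y s = lam * extEff N y s + (1 - lam) * extEff B y s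

/-- The noise content `w(A; 𝓝)` of `A` with respect to a set `𝓝` of noisy
observables. -/
noncomputable def noiseContent (𝓝 : Set (Obs S)) (A : Obs S) : ℝ :=
  sSup {lam : ℝ | 0 ≤ lam ∧ lam ≤ 1 ∧ ∃ N ∈ 𝓝, ∃ B : Obs S, IsMixture lam N B A}

section Helpers
variable {V : Type*} [NormedAddCommGroup V] [NormedSpace ℝ V] {S : Set V}

lemma affine_extEff (A : Obs S) (y : ℕ) : AffineOn S (extEff A y) := by
  intro s₁ s₂ p hp0 hp1 h
  unfold extEff
  split
  · exact A.affine _ s₁ s₂ p hp0 hp1 h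
  · ring

lemma extEff_nonneg (A : Obs S) (y : ℕ) (s : S) : 0 ≤ extEff A y s := by
  unfold extEff; split
  · exact A.nonneg _ s
  · exact le_refl 0

lemma extEff_of_le (A : Obs S) {y : ℕ} (h : A.n ≤ y) (s : S) : extEff A y s = 0 := by
  unfold extEff; rw [dif_neg (by omega)]

lemma eff_eq_extEff (A : Obs S) (x : Fin A.n) (s : S) : A.eff x s = extEff A x.val s := by
  unfold extEff; rw [dif_pos x.isLt]

lemma affine_sum {ι : Type*} (t : Finset ι) (c : ι → ℝ) (f : ι → S → ℝ)
    (hf : ∀ i ∈ t, AffineOn S (f i)) :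
    AffineOn S (fun s => ∑ i ∈ t, c i * f i s) := by
  intro s₁ s₂ p hp0 hp1 h
  simp only
  rw [Finset.mul_sum, Finset.mul_sum, ← Finset.sum_add_distrib]
  refine Finset.sum_congr rfl fun i hi => ?_
  rw [hf i hi s₁ s₂ p hp0 hp1 h]
  ring

lemma sum_range_extEff (A : Obs S) {n₀ : ℕ} (h : A.n ≤ n₀) (s : S) :
    ∑ x ∈ Finset.range n₀, extEff A x s = 1 := by
  rw [← Finset.sum_subset (Finset.range_subset_range.mpr h)
      (fun x _ hx => extEff_of_le A (by simpa using hx) s)]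
  rw [← Fin.sum_univ_eq_sum_range (fun x => extEff A x s) A.n]
  rw [Finset.sum_congr rfl fun x _ => (eff_eq_extEff A x s).symm]
  exact A.normalized s

lemma obs_n_pos (hSne : S.Nonempty) (A : Obs S) : 0 < A.n := by
  rcases Nat.eq_zero_or_pos A.n with h | h
  · exfalso
    obtain ⟨v, hv⟩ := hSne
    have := A.normalized ⟨v, hv⟩
    rw [Finset.sum_eq_zero] at this
    · exact one_ne_zero this.symm
    · intro x _; exact absurd x.isLt (by omega)
  · exact h

end Helpers
section Constructions
variable {V : Type*} [NormedAddCommGroup V] [NormedSpace ℝ V] {S : Set V}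

/-- Convex combination of observables on a common (extended) outcome set. -/
noncomputable def combObs {ι : Type*} [Fintype ι] (n₀ : ℕ) (c : ι → ℝ) (F : ι → Obs S)
    (hc : ∀ i, 0 ≤ c i) (hc1 : ∑ i, c i = 1) (hn : ∀ i, (F i).n ≤ n₀) : Obs S where
  n := n₀
  eff := fun y s => ∑ i, c i * extEff (F i) y.val s
  affine := fun _ => affine_sum _ _ _ fun i _ => affine_extEff _ _
  nonneg := fun _ s => Finset.sum_nonneg fun i _ => mul_nonneg (hc i) (extEff_nonneg _ _ _)
  normalized := fun s => by
    rw [Finset.sum_comm]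
    have h1 : ∀ i : ι, ∑ y : Fin n₀, c i * extEff (F i) y.val s = c i := by
      intro i
      rw [← Finset.mul_sum, Fin.sum_univ_eq_sum_range (fun y => extEff (F i) y s) n₀,
        sum_range_extEff (F i) (hn i) s, mul_one]
    simp_rw [h1]; exact hc1

@[simp] lemma combObs_n {ι : Type*} [Fintype ι] (n₀ : ℕ) (c : ι → ℝ) (F : ι → Obs S)
    (hc hc1 hn) : (combObs n₀ c F hc hc1 hn : Obs S).n = n₀ := rfl

@[simp] lemma combObs_eff {ι : Type*} [Fintype ι] (n₀ : ℕ) (c : ι → ℝ) (F : ι → Obs S)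
    (hc hc1 hn) (y : Fin n₀) (s : S) :
    (combObs n₀ c F hc hc1 hn : Obs S).eff y s = ∑ i, c i * extEff (F i) y.val s := rfl

lemma combObs_extEff {ι : Type*} [Fintype ι] (n₀ : ℕ) (c : ι → ℝ) (F : ι → Obs S)
    (hc hc1 hn) (y : ℕ) (s : S) :
    extEff (combObs n₀ c F hc hc1 hn : Obs S) y s = ∑ i, c i * extEff (F i) y s := by
  by_cases h : y < n₀
  · have h' : y < (combObs n₀ c F hc hc1 hn : Obs S).n := h
    have : extEff (combObs n₀ c F hc hc1 hn : Obs S) y s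
        = (combObs n₀ c F hc hc1 hn : Obs S).eff ⟨y, h'⟩ s := dif_pos h'
    rw [this]
    rfl
  · rw [extEff_of_le _ (by simpa using h) s]
    rw [Finset.sum_eq_zero]
    intro i _
    rw [extEff_of_le _ (le_trans (hn i) (by omega)) s, mul_zero]

/-- Postprocessing of `N` (with all effects beyond `k` vanishing) by a stochastic
matrix defined on the first `k` outcomes. -/
noncomputable def ppObs (n₀ k : ℕ) (ν : Fin k → Fin n₀ → ℝ) (N : Obs S)
    (hν : ∀ x y, 0 ≤ ν x y) (hν1 : ∀ x, ∑ y, ν x y = 1)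
    (hz : ∀ (x : ℕ) (s : S), k ≤ x → extEff N x s = 0) : Obs S where
  n := n₀
  eff := fun y s => ∑ x : Fin k, ν x y * extEff N x.val s
  affine := fun _ => affine_sum _ _ _ fun x _ => affine_extEff _ _
  nonneg := fun y s => Finset.sum_nonneg fun x _ => mul_nonneg (hν x y) (extEff_nonneg _ _ _)
  normalized := fun s => by
    rw [Finset.sum_comm]
    have h1 : ∀ x : Fin k, ∑ y : Fin n₀, ν x y * extEff N x.val s = extEff N x.val s := by
      intro x; rw [← Finset.sum_mul, hν1 x, one_mul]
    simp_rw [h1]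
    rw [Fin.sum_univ_eq_sum_range (fun x => extEff N x s) k]
    rw [Finset.sum_subset (Finset.range_subset_range.mpr (le_max_left k N.n))
      (fun x _ hx' => hz x s (by simpa using hx'))]
    exact sum_range_extEff N (le_max_right _ _) s

@[simp] lemma ppObs_n (n₀ k : ℕ) (ν : Fin k → Fin n₀ → ℝ) (N : Obs S) (hν hν1 hz) :
    (ppObs n₀ k ν N hν hν1 hz : Obs S).n = n₀ := rfl

@[simp] lemma ppObs_eff (n₀ k : ℕ) (ν : Fin k → Fin n₀ → ℝ) (N : Obs S) (hν hν1 hz)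
    (y : Fin n₀) (s : S) :
    (ppObs n₀ k ν N hν hν1 hz : Obs S).eff y s = ∑ x : Fin k, ν x y * extEff N x.val s := rfl

lemma ppObs_postprocess (n₀ k : ℕ) (hn₀ : 0 < n₀) (ν : Fin k → Fin n₀ → ℝ) (N : Obs S)
    (hν : ∀ x y, 0 ≤ ν x y) (hν1 : ∀ x, ∑ y, ν x y = 1)
    (hz : ∀ (x : ℕ) (s : S), k ≤ x → extEff N x s = 0) :
    Postprocess N (ppObs n₀ k ν N hν hν1 hz) := by
  refine ⟨fun x y => if h : x.val < k then ν ⟨x.val, h⟩ y else if y = ⟨0, hn₀⟩ then 1 else 0,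
    ?_, ?_, ?_⟩
  · intro x y
    dsimp only
    split
    · exact hν _ _
    · split <;> norm_num
  · intro x
    dsimp only
    by_cases h : (x : ℕ) < k
    · simp only [dif_pos h]
      exact hν1 ⟨x.val, h⟩
    · simp only [dif_neg h]
      rw [Finset.sum_ite_eq', if_pos (Finset.mem_univ _)]
  · intro y s
    set g : ℕ → ℝ := fun x => (if h : x < k then ν ⟨x, h⟩ y else 0) * extEff N x s with hg
    have hgk : ∀ x : ℕ, k ≤ x → g x = 0 := by
      intro x hx; simp only [hg]; rw [dif_neg (by omega), zero_mul]
    have hgN : ∀ x : ℕ, N.n ≤ x → g x = 0 := by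
      intro x hx; simp only [hg]; rw [extEff_of_le N hx, mul_zero]
    have lhs : (∑ x : Fin k, ν x y * extEff N x.val s) = ∑ x ∈ Finset.range k, g x := by
      rw [← Fin.sum_univ_eq_sum_range g k]
      refine Finset.sum_congr rfl fun x _ => ?_
      simp only [hg]
      rw [dif_pos x.isLt]
    have rhs : ∑ x : Fin N.n, (if h : x.val < k then ν ⟨x.val, h⟩ y
          else if y = ⟨0, hn₀⟩ then 1 else 0) * N.eff x s = ∑ x ∈ Finset.range N.n, g x := by
      rw [← Fin.sum_univ_eq_sum_range g N.n]
      refine Finset.sum_congr rfl fun x _ => ?_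
      by_cases h : x.val < k
      · simp only [hg]
        rw [dif_pos h, dif_pos h, eff_eq_extEff]
      · rw [dif_neg h, eff_eq_extEff, hz x.val s (by omega), mul_zero,
          hgk x.val (by omega)]
    show (∑ x : Fin k, ν x y * extEff N x.val s) = _
    rw [lhs, rhs,
      Finset.sum_subset (Finset.range_subset_range.mpr (le_max_left k N.n))
        (fun x _ hx' => hgk x (by simpa using hx')),
      Finset.sum_subset (Finset.range_subset_range.mpr (le_max_right k N.n))
        (fun x _ hx' => hgN x (by simpa using hx'))]

end Constructions
section MixMem
variable {V : Type*} [NormedAddCommGroup V] [NormedSpace ℝ V] {S : Set V}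

/-- The set of noise-content parameters. -/
def Sset (𝓝 : Set (Obs S)) (A : Obs S) : Set ℝ :=
  {lam : ℝ | 0 ≤ lam ∧ lam ≤ 1 ∧ ∃ N ∈ 𝓝, ∃ B : Obs S, IsMixture lam N B A}

lemma noiseContent_eq (𝓝 : Set (Obs S)) (A : Obs S) :
    noiseContent 𝓝 A = sSup (Sset 𝓝 A) := rfl

/-- A finite convex combination (on a common extended outcome set) of members of a
convex set of observables stays in the set. -/
lemma mixMem (𝓝 : Set (Obs S))
    (hconv : ∀ N₁ ∈ 𝓝, ∀ N₂ ∈ 𝓝, ∀ lam : ℝ, 0 ≤ lam → lam ≤ 1 →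
      ∀ M : Obs S, IsMixture lam N₁ N₂ M → M ∈ 𝓝) :
    ∀ (r n₀ : ℕ) (q : Fin r → ℝ), (∀ i, 0 ≤ q i) → (∑ i, q i) = 1 →
    ∀ M : Fin r → Obs S, (∀ i, (M i).n ≤ n₀) → (∀ i, M i ∈ 𝓝) →
    ∀ M₀ : Obs S, (∀ (y : ℕ) (s : S), extEff M₀ y s = ∑ i, q i * extEff (M i) y s) →
    M₀ ∈ 𝓝 := by
  intro r
  induction r with
  | zero => intro n₀ q hq hq1; simp at hq1
  | succ r ih =>
    intro n₀ q hq hq1 M hMn hMmem M₀ hext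
    have hsucc : ∑ i : Fin r, q i.succ = 1 - q 0 := by
      rw [Fin.sum_univ_succ] at hq1; linarith
    have hq01 : q 0 ≤ 1 := by
      have : ∀ i ∈ Finset.univ, 0 ≤ q i := fun i _ => hq i
      have := Finset.single_le_sum this (Finset.mem_univ 0)
      linarith [hq1 ▸ this]
    rcases eq_or_lt_of_le hq01 with h1 | h1
    · -- q 0 = 1 : all other weights vanish
      have hz : ∀ i : Fin r, q i.succ = 0 := by
        have h0 : ∑ i : Fin r, q i.succ = 0 := by rw [hsucc, ← h1]; ring
        intro i
        have := (Finset.sum_eq_zero_iff_of_nonneg (fun i _ => hq i.succ)).mp h0 i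
          (Finset.mem_univ i)
        exact this
      refine hconv (M 0) (hMmem 0) (M 0) (hMmem 0) 1 zero_le_one le_rfl M₀ ?_
      intro y s
      have := hext y s
      rw [Fin.sum_univ_succ] at this
      simp only [hz, zero_mul, Finset.sum_const_zero, add_zero] at this
      rw [this, ← h1]; ring
    · -- q 0 < 1
      have hc : (0 : ℝ) < 1 - q 0 := by linarith
      set q' : Fin r → ℝ := fun i => q i.succ / (1 - q 0) with hq'
      have hq'0 : ∀ i, 0 ≤ q' i := fun i => div_nonneg (hq _) hc.le
      have hq'1 : ∑ i, q' i = 1 := by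
        rw [hq', ← Finset.sum_div, hsucc, div_self hc.ne']
      set M' : Obs S := combObs n₀ q' (fun i => M i.succ) hq'0 hq'1 (fun i => hMn i.succ)
        with hM'
      have hM'ext : ∀ (y : ℕ) (s : S), extEff M' y s = ∑ i, q' i * extEff (M i.succ) y s :=
        fun y s => combObs_extEff _ _ _ _ _ _ y s
      have hM'mem : M' ∈ 𝓝 :=
        ih n₀ q' hq'0 hq'1 (fun i => M i.succ) (fun i => hMn i.succ)
          (fun i => hMmem i.succ) M' hM'ext
      refine hconv (M 0) (hMmem 0) M' hM'mem (q 0) (hq 0) hq01 M₀ ?_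
      intro y s
      rw [hext y s, Fin.sum_univ_succ, hM'ext y s, Finset.mul_sum]
      congr 1
      refine Finset.sum_congr rfl fun i _ => ?_
      rw [hq']
      field_simp


/-- The noise-content parameter set is downward closed (below 1). -/
lemma Sset_down (𝓝 : Set (Obs S)) (A : Obs S) {lam mu : ℝ}
    (h : lam ∈ Sset 𝓝 A) (h0 : 0 ≤ mu) (hle : mu ≤ lam) (hlt : mu < 1) :
    mu ∈ Sset 𝓝 A := by
  obtain ⟨hl0, hl1, N, hN, C, hmix⟩ := h
  refine ⟨h0, hle.trans hl1, N, hN, ?_⟩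
  have hc : (0 : ℝ) < 1 - mu := by linarith
  set c₁ : ℝ := (lam - mu) / (1 - mu) with hc₁
  set c₂ : ℝ := (1 - lam) / (1 - mu) with hc₂
  have hc₁0 : 0 ≤ c₁ := div_nonneg (by linarith) hc.le
  have hc₂0 : 0 ≤ c₂ := div_nonneg (by linarith) hc.le
  have hcsum : ∀ i : Bool, 0 ≤ (fun i : Bool => if i then c₁ else c₂) i := by
    intro i; cases i <;> simpa
  have hsum1 : ∑ i : Bool, (fun i : Bool => if i then c₁ else c₂) i = 1 := by
    simp only [Fintype.sum_bool, if_true, Bool.false_eq_true, if_false]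
    rw [hc₁, hc₂]
    field_simp
    ring
  set C' : Obs S := combObs (max N.n C.n) (fun i : Bool => if i then c₁ else c₂)
    (fun i : Bool => if i then N else C) hcsum hsum1
    (by intro i; cases i <;> simp) with hC'
  refine ⟨C', ?_⟩
  intro y s
  have hC'e : extEff C' y s = c₁ * extEff N y s + c₂ * extEff C y s := by
    rw [hC', combObs_extEff]
    simp [Fintype.sum_bool]
  rw [hmix y s, hC'e]
  have e1 : (1 - mu) * c₁ = lam - mu := by rw [hc₁]; field_simp
  have e2 : (1 - mu) * c₂ = 1 - lam := by rw [hc₂]; field_simp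
  linear_combination (-extEff N y s) * e1 + (-extEff C y s) * e2

end MixMem

/-- if `𝓝` is convex and closed under postprocessing, the noise content
of a simulated observable is at least the minimum of the noise contents of its
simulators. -/
theorem statement7 {V : Type*} [NormedAddCommGroup V] [NormedSpace ℝ V]
    [FiniteDimensional ℝ V] {S : Set V}
    (hScomp : IsCompact S) (hSconv : Convex ℝ S) (hSne : S.Nonempty)
    (𝓝 : Set (Obs S))
    (hpost : ∀ A ∈ 𝓝, ∀ B : Obs S, Postprocess A B → B ∈ 𝓝)
    (hconv : ∀ N₁ ∈ 𝓝, ∀ N₂ ∈ 𝓝, ∀ lam : ℝ, 0 ≤ lam → lam ≤ 1 →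
      ∀ M : Obs S, IsMixture lam N₁ N₂ M → M ∈ 𝓝)
    (A : Obs S) (m k : ℕ) (hm : 0 < m) (B : Fin m → Obs S)
    (hk : ∀ i, (B i).n = k) (p : Fin m → ℝ) (ν : Fin m → Fin k → Fin A.n → ℝ)
    (hp : ∀ i, 0 ≤ p i) (hp1 : ∑ i, p i = 1)
    (hν : ∀ i x y, 0 ≤ ν i x y) (hν1 : ∀ i x, ∑ y, ν i x y = 1)
    (hsim : ∀ y s,
      A.eff y s = ∑ i, ∑ x, p i * ν i x y * (B i).eff (Fin.cast (hk i).symm x) s) :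
    (Finset.univ.inf' (Finset.univ_nonempty_iff.mpr ⟨⟨0, hm⟩⟩)
        fun i => noiseContent 𝓝 (B i)) ≤ noiseContent 𝓝 A := by
  classical
  have hne : (Finset.univ : Finset (Fin m)).Nonempty := Finset.univ_nonempty_iff.mpr ⟨⟨0, hm⟩⟩
  set w := Finset.univ.inf' hne (fun i => noiseContent 𝓝 (B i)) with hwdef
  show w ≤ noiseContent 𝓝 A
  rcases Set.eq_empty_or_nonempty 𝓝 with hemp | ⟨N₀, hN₀⟩
  · -- `𝓝` is empty: every noise content is `sSup ∅ = 0`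
    have hz : ∀ X : Obs S, noiseContent 𝓝 X = 0 := by
      intro X
      rw [noiseContent_eq]
      have : Sset 𝓝 X = ∅ := by
        ext lam
        simp [Sset, hemp]
      rw [this, Real.sSup_empty]
    rw [hz A]
    calc w ≤ noiseContent 𝓝 (B ⟨0, hm⟩) :=
          Finset.inf'_le _ (Finset.mem_univ _)
      _ = 0 := hz _
  · -- `𝓝` is nonempty
    have hS0 : ∀ X : Obs S, (0 : ℝ) ∈ Sset 𝓝 X := by
      intro X
      exact ⟨le_rfl, zero_le_one, N₀, hN₀, X, fun y s => by ring⟩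
    have hSne' : ∀ X : Obs S, (Sset 𝓝 X).Nonempty := fun X => ⟨0, hS0 X⟩
    have hbdd : ∀ X : Obs S, BddAbove (Sset 𝓝 X) := fun X => ⟨1, fun x hx => hx.2.1⟩
    have hub : ∀ X : Obs S, noiseContent 𝓝 X ≤ 1 := fun X =>
      Real.sSup_le (fun x hx => hx.2.1) zero_le_one
    rw [noiseContent_eq, Real.le_sSup_iff (hbdd A) (hSne' A)]
    intro ε hε
    rcases lt_or_ge (w + ε) 0 with hcase | hcase
    · exact ⟨0, hS0 A, hcase⟩
    -- main case : `0 ≤ w + ε`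
    have hw1 : w ≤ 1 := le_trans (Finset.inf'_le _ (Finset.mem_univ ⟨0, hm⟩)) (hub _)
    have hAn : 0 < A.n := obs_n_pos hSne A
    -- pick `lam i ∈ Sset 𝓝 (B i)` with `w + ε < lam i`
    have hlt : ∀ i : Fin m, w + ε < sSup (Sset 𝓝 (B i)) := by
      intro i
      have : w ≤ noiseContent 𝓝 (B i) := Finset.inf'_le _ (Finset.mem_univ i)
      rw [noiseContent_eq] at this
      linarith
    choose lam hlammem hlamgt using fun i => exists_lt_of_lt_csSup (hSne' (B i)) (hlt i)
    -- the common noise parameter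
    set μ : ℝ := min (Finset.univ.inf' hne lam) (w + ε / 2) with hμdef
    have hμgt : w + ε < μ := by
      apply lt_min
      · rw [Finset.lt_inf'_iff]
        intro i _
        exact hlamgt i
      · linarith
    have hμ0 : 0 ≤ μ := le_trans hcase hμgt.le
    have hμpos : 0 < μ := lt_of_le_of_lt hcase hμgt
    have hμ1 : μ < 1 := lt_of_le_of_lt (min_le_right _ _) (by linarith)
    have hμle : ∀ i, μ ≤ lam i :=
      fun i => le_trans (min_le_left _ _) (Finset.inf'_le _ (Finset.mem_univ i))
    have hμmem : ∀ i, μ ∈ Sset 𝓝 (B i) :=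
      fun i => Sset_down 𝓝 (B i) (hlammem i) hμ0 (hμle i) hμ1
    choose NN hNNmem CC hmix using fun i => (hμmem i).2.2
    -- the effects of `NN i` and `CC i` vanish beyond `k`
    have hzN : ∀ i (x : ℕ) (s : S), k ≤ x → extEff (NN i) x s = 0 := by
      intro i x s hx
      have h := hmix i x s
      rw [extEff_of_le (B i) (by rw [hk i]; exact hx) s] at h
      have ha := extEff_nonneg (NN i) x s
      have hb := extEff_nonneg (CC i) x s
      have h1 : μ * extEff (NN i) x s = 0 := by nlinarith
      exact (mul_eq_zero.mp h1).resolve_left (ne_of_gt hμpos)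
    have hzC : ∀ i (x : ℕ) (s : S), k ≤ x → extEff (CC i) x s = 0 := by
      intro i x s hx
      have h := hmix i x s
      rw [extEff_of_le (B i) (by rw [hk i]; exact hx) s] at h
      have ha := extEff_nonneg (NN i) x s
      have hb := extEff_nonneg (CC i) x s
      have h1 : (1 - μ) * extEff (CC i) x s = 0 := by nlinarith
      exact (mul_eq_zero.mp h1).resolve_left (by linarith)
    -- the postprocessed noisy observables and their mixture
    set NT : Obs S := combObs A.n p
      (fun i => ppObs A.n k (ν i) (NN i) (hν i) (hν1 i) (hzN i)) hp hp1 (fun i => Nat.le_of_eq (ppObs_n _ _ _ _ _ _ _))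
      with hNT
    set CT : Obs S := combObs A.n p
      (fun i => ppObs A.n k (ν i) (CC i) (hν i) (hν1 i) (hzC i)) hp hp1 (fun i => Nat.le_of_eq (ppObs_n _ _ _ _ _ _ _))
      with hCT
    have hNTmem : NT ∈ 𝓝 := by
      refine mixMem 𝓝 hconv m A.n p hp hp1
        (fun i => ppObs A.n k (ν i) (NN i) (hν i) (hν1 i) (hzN i)) (fun i => le_rfl) ?_ NT
        (fun y s => combObs_extEff _ _ _ _ _ _ y s)
      intro i
      exact hpost (NN i) (hNNmem i) _ (ppObs_postprocess A.n k hAn (ν i) (NN i) _ _ _)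
    refine ⟨μ, ⟨hμ0, hμ1.le, NT, hNTmem, CT, ?_⟩, hμgt⟩
    -- the mixture identity `A = μ NT + (1-μ) CT`
    intro y s
    rw [hNT, combObs_extEff, hCT, combObs_extEff]
    by_cases hy : y < A.n
    · have hAe : extEff A y s = A.eff ⟨y, hy⟩ s := dif_pos hy
      rw [hAe, hsim ⟨y, hy⟩ s]
      have hppN : ∀ i, extEff (ppObs A.n k (ν i) (NN i) (hν i) (hν1 i) (hzN i)) y s
          = ∑ x : Fin k, ν i x ⟨y, hy⟩ * extEff (NN i) x.val s := fun i => dif_pos hy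
      have hppC : ∀ i, extEff (ppObs A.n k (ν i) (CC i) (hν i) (hν1 i) (hzC i)) y s
          = ∑ x : Fin k, ν i x ⟨y, hy⟩ * extEff (CC i) x.val s := fun i => dif_pos hy
      simp only [hppN, hppC]
      rw [Finset.mul_sum, Finset.mul_sum, ← Finset.sum_add_distrib]
      refine Finset.sum_congr rfl fun i _ => ?_
      have hBe : ∀ x : Fin k, (B i).eff (Fin.cast (hk i).symm x) s
          = μ * extEff (NN i) x.val s + (1 - μ) * extEff (CC i) x.val s := by
        intro x
        rw [eff_eq_extEff]
        exact hmix i x.val s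
      simp only [hBe]
      rw [Finset.mul_sum, Finset.mul_sum, Finset.mul_sum, Finset.mul_sum,
        ← Finset.sum_add_distrib]
      refine Finset.sum_congr rfl fun x _ => ?_
      ring
    · have hyA : A.n ≤ y := le_of_not_gt hy
      rw [extEff_of_le A hyA s]
      rw [Finset.sum_eq_zero, Finset.sum_eq_zero]
      · ring
      · intro i _
        rw [extEff_of_le _ (show (ppObs A.n k (ν i) (CC i) (hν i) (hν1 i) (hzC i)).n ≤ y from hyA) s,
          mul_zero]
      · intro i _
        rw [extEff_of_le _ (show (ppObs A.n k (ν i) (NN i) (hν i) (hν1 i) (hzN i)).n ≤ y from hyA) s,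
          mul_zero]
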